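/- Let κ be a cardinal and let X be the subspace of (κ⁺+1)^ω consisting of functions f for which {n : f n = κ⁺} is finite. Then every nonempty open subset of X contains a countably infinite subset that is closed and discrete in X. In particular, X is not countably compact. -/

import Mathlib

open Set

/-- A space is countably compact iff every countable open cover has a finite subcover. -/
def CountablyCompactCover (X : Type*) [TopologicalSpace X] : Prop :=
  ∀ U : ℕ → Set X, (∀ n, IsOpen (U n)) → (⋃ n, U n) = Set.univ →
    ∃ s : Finset ℕ, (⋃ n ∈ s, U n) = Set.univ

/-- In a T1 space, a set such that every point has a neighborhood meeting it in a
finite set is closed and discrete. -/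
lemma aux_closed_discrete {Z : Type*} [TopologicalSpace Z] [T1Space Z] (A : Set Z)
    (h : ∀ z : Z, ∃ N, N ∈ nhds z ∧ (N ∩ A).Finite) :
    IsClosed A ∧ DiscreteTopology ↥A := by
  constructor
  · rw [← isOpen_compl_iff, isOpen_iff_mem_nhds]
    intro z hz
    obtain ⟨N, hN, hfin⟩ := h z
    have hcl : IsClosed (N ∩ A) := hfin.isClosed
    refine Filter.mem_of_superset
      (Filter.inter_mem hN (hcl.isOpen_compl.mem_nhds fun hm => hz hm.2)) ?_
    rintro x ⟨hxN, hxc⟩ hxA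
    exact hxc ⟨hxN, hxA⟩
  · rw [discreteTopology_iff_isOpen_singleton]
    rintro ⟨z, hz⟩
    obtain ⟨N, hN, hfin⟩ := h z
    have hcl : IsClosed ((N ∩ A) \ {z}) := (hfin.subset diff_subset).isClosed
    have hmem : N ∩ ((N ∩ A) \ {z})ᶜ ∈ nhds z :=
      Filter.inter_mem hN (hcl.isOpen_compl.mem_nhds (by simp))
    obtain ⟨O, hOsub, hOopen, hzO⟩ := mem_nhds_iff.1 hmem
    have : ({(⟨z, hz⟩ : ↥A)} : Set ↥A) = Subtype.val ⁻¹' O := by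
      ext ⟨x, hx⟩
      simp only [mem_singleton_iff, Subtype.mk_eq_mk, mem_preimage]
      constructor
      · rintro rfl; exact hzO
      · intro hxO
        have := hOsub hxO
        by_contra hne
        exact this.2 ⟨⟨this.1, hx⟩, hne⟩
    rw [this]
    exact hOopen.preimage continuous_subtype_val

/-- A subset of a closed discrete set is closed. -/
lemma aux_subset_closed {Z : Type*} [TopologicalSpace Z] {A B : Set Z}
    (hA : IsClosed A) (hd : DiscreteTopology ↥A) (hBA : B ⊆ A) : IsClosed B := by
  have h1 : IsClosed (Subtype.val ⁻¹' B : Set ↥A) := isClosed_discrete _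
  have h2 := hA.isClosedEmbedding_subtypeVal.isClosedMap _ h1
  have h3 : Subtype.val '' (Subtype.val ⁻¹' B : Set ↥A) = B := by
    rw [Subtype.image_preimage_coe, inter_eq_self_of_subset_right hBA]
  rwa [h3] at h2

/-- For a cardinal κ, in the subspace X of (κ⁺+1)^ω of functions taking
value κ⁺ only finitely often, every nonempty open subset contains a countably infinite
subset that is closed and discrete in X; in particular X is not countably compact. -/
theorem stmt_2 (κ : Cardinal) (c : Ordinal) (hc : c = (Order.succ κ).ord)
    (X : Set (ℕ → ↥(Set.Iic c)))
    (hX : X = {f | {n | (f n : Ordinal) = c}.Finite}) :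
    (∀ V : Set ↥X, IsOpen V → V.Nonempty →
      ∃ A ⊆ V, A.Countable ∧ A.Infinite ∧ IsClosed A ∧ DiscreteTopology ↥A) ∧
    ¬ CountablyCompactCover ↥X := by
  have hc0 : (0 : Ordinal) < c := by
    rw [hc, ← Cardinal.ord_zero]
    exact Cardinal.ord_lt_ord.2 (lt_of_le_of_lt (zero_le (a := κ)) (Order.lt_succ κ))
  have part1 : ∀ V : Set ↥X, IsOpen V → V.Nonempty →
      ∃ A ⊆ V, A.Countable ∧ A.Infinite ∧ IsClosed A ∧ DiscreteTopology ↥A := by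
    intro V hV hVne
    obtain ⟨f, hfV⟩ := hVne
    obtain ⟨W, hW, hVW⟩ := isOpen_induced_iff.1 hV
    have hfW : (f : ℕ → ↥(Set.Iic c)) ∈ W := by rw [← hVW] at hfV; exact hfV
    obtain ⟨I, u, hu, hpi⟩ := isOpen_pi_iff.1 hW _ hfW
    have hf_fin : {n : ℕ | ((f : ℕ → ↥(Set.Iic c)) n : Ordinal) = c}.Finite :=
      (Set.ext_iff.1 hX _).1 f.2
    set T : Set ℕ := ((I : Set ℕ) ∪ {n | ((f : ℕ → ↥(Set.Iic c)) n : Ordinal) = c})ᶜ with hT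
    have hTinf : T.Infinite := (I.finite_toSet.union hf_fin).infinite_compl
    set E : ℕ ↪ ↥T := Set.Infinite.natEmbedding T hTinf with hE
    set e : ℕ → ℕ := fun k => (E k : ℕ) with he
    have he_inj : Function.Injective e :=
      Subtype.val_injective.comp E.injective
    have he_mem : ∀ k, e k ∈ T := fun k => (E k).2
    have he_notI : ∀ k, e k ∉ (I : Set ℕ) := fun k h => (he_mem k) (Or.inl h)
    have he_ne : ∀ k, ((f : ℕ → ↥(Set.Iic c)) (e k) : Ordinal) ≠ c :=
      fun k h => (he_mem k) (Or.inr h)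
    set g : ℕ → (ℕ → ↥(Set.Iic c)) := fun n m =>
      if ∃ k < n, e k = m then ⟨c, le_refl c⟩ else (f : ℕ → ↥(Set.Iic c)) m with hg
    have hg_of_not : ∀ n m, (¬ ∃ k < n, e k = m) → g n m = (f : ℕ → ↥(Set.Iic c)) m :=
      fun n m h => if_neg h
    have hg_of : ∀ n m, (∃ k < n, e k = m) → (g n m : Ordinal) = c := by
      intro n m h; rw [hg]; simp only [if_pos h]
    have hgX : ∀ n, g n ∈ X := by
      intro n
      rw [hX]
      refine Set.Finite.subset (((Set.finite_Iio n).image e).union hf_fin) ?_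
      intro m hm
      by_cases h : ∃ k < n, e k = m
      · obtain ⟨k, hk, rfl⟩ := h
        exact Or.inl ⟨k, hk, rfl⟩
      · right
        have := hg_of_not n m h
        simpa [this] using hm
    set a : ℕ → ↥X := fun n => ⟨g n, hgX n⟩ with ha
    have haV : ∀ n, a n ∈ V := by
      intro n
      rw [← hVW]
      refine hpi ?_
      intro i hi
      have hnotin : ¬ ∃ k < n, e k = i := by
        rintro ⟨k, _, rfl⟩; exact he_notI k hi
      show g n i ∈ u i
      rw [hg_of_not n i hnotin]
      exact (hu i hi).2
    have key : ∀ n m : ℕ, n < m → a n ≠ a m := by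
      intro n m hnm hEq
      have hgeq : g n = g m := congrArg Subtype.val hEq
      have h1 : (g n (e n) : Ordinal) = (g m (e n) : Ordinal) := by rw [hgeq]
      have h2 : (g m (e n) : Ordinal) = c := hg_of m (e n) ⟨n, hnm, rfl⟩
      have h3 : g n (e n) = (f : ℕ → ↥(Set.Iic c)) (e n) := by
        refine hg_of_not n (e n) ?_
        rintro ⟨k, hk, hke⟩
        exact absurd (he_inj hke) hk.ne
      rw [h3] at h1
      exact he_ne n (h1.trans h2)
    have ha_inj : Function.Injective a := by
      intro n m h
      rcases lt_trichotomy n m with h' | h' | h'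
      · exact absurd h (key n m h')
      · exact h'
      · exact absurd h.symm (key m n h')
    refine ⟨Set.range a, ?_, Set.countable_range a, Set.infinite_range_of_injective ha_inj,
      ?_⟩
    · rintro x ⟨n, rfl⟩; exact haV n
    apply aux_closed_discrete
    intro z
    have hz_fin : {m : ℕ | ((z : ℕ → ↥(Set.Iic c)) m : Ordinal) = c}.Finite :=
      (Set.ext_iff.1 hX _).1 z.2
    obtain ⟨k, hk⟩ := (hz_fin.preimage he_inj.injOn).infinite_compl.nonempty
    have hzk : ((z : ℕ → ↥(Set.Iic c)) (e k) : Ordinal) ≠ c := hk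
    set N : Set ↥X := {x : ↥X | ((x : ℕ → ↥(Set.Iic c)) (e k) : Ordinal) < c} with hN
    have hNopen : IsOpen N := by
      have hNeq : N = (fun x : ↥X => ((x : ℕ → ↥(Set.Iic c)) (e k) : Ordinal)) ⁻¹' Set.Iio c :=
        rfl
      rw [hNeq]
      exact isOpen_Iio.preimage
        (continuous_subtype_val.comp ((continuous_apply (e k)).comp continuous_subtype_val))
    have hzN : z ∈ N := lt_of_le_of_ne ((z : ℕ → ↥(Set.Iic c)) (e k)).2 hzk
    refine ⟨N, hNopen.mem_nhds hzN, ?_⟩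
    refine Set.Finite.subset ((Set.finite_Iic k).image a) ?_
    rintro x ⟨hxN, n, rfl⟩
    refine ⟨n, ?_, rfl⟩
    by_contra h
    rw [Set.mem_Iic, not_le] at h
    have : (g n (e k) : Ordinal) = c := hg_of n (e k) ⟨k, h, rfl⟩
    exact absurd this (ne_of_lt hxN)
  refine ⟨part1, ?_⟩
  intro hCC
  have hf0 : (fun _ : ℕ => (⟨0, hc0.le⟩ : ↥(Set.Iic c))) ∈ X := by
    rw [hX]
    refine Set.Finite.subset Set.finite_empty fun n hn => ?_
    simp only [Set.mem_setOf_eq] at hn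
    exact absurd hn hc0.ne
  obtain ⟨A, hAsub, hAc, hAi, hAcl, hAd⟩ :=
    part1 Set.univ isOpen_univ ⟨⟨_, hf0⟩, Set.mem_univ _⟩
  haveI := hAc.to_subtype
  haveI := hAi.to_subtype
  obtain ⟨d⟩ := nonempty_denumerable ↥A
  set q : ↥A ≃ ℕ := Denumerable.eqv ↥A with hq
  set b : ℕ → ↥X := fun n => ((q.symm n : ↥A) : ↥X) with hb
  have hb_inj : Function.Injective b :=
    Subtype.val_injective.comp q.symm.injective
  have hb_mem : ∀ n, b n ∈ A := fun n => (q.symm n).2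
  have hb_surj : ∀ x ∈ A, ∃ n, b n = x := by
    intro x hx
    exact ⟨q ⟨x, hx⟩, by simp [hb]⟩
  set U : ℕ → Set ↥X := fun n => (A \ (b '' Set.Iic n))ᶜ with hU
  have hUopen : ∀ n, IsOpen (U n) :=
    fun n => (aux_subset_closed hAcl hAd diff_subset).isOpen_compl
  have hUcov : (⋃ n, U n) = Set.univ := by
    ext x
    simp only [Set.mem_iUnion, Set.mem_univ, iff_true, hU, Set.mem_compl_iff,
      Set.mem_diff, not_and, not_not]
    by_cases hx : x ∈ A
    · obtain ⟨n, rfl⟩ := hb_surj x hx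
      exact ⟨n, fun _ => ⟨n, le_refl n, rfl⟩⟩
    · exact ⟨0, fun h => absurd h hx⟩
  obtain ⟨s, hs⟩ := hCC U hUopen hUcov
  set Nn := s.sup id with hNn
  have hx : b (Nn + 1) ∈ ⋃ n ∈ s, U n := by rw [hs]; exact Set.mem_univ _
  simp only [Set.mem_iUnion] at hx
  obtain ⟨n, hns, hxU⟩ := hx
  rw [hU] at hxU
  simp only [Set.mem_compl_iff, Set.mem_diff, not_and, not_not] at hxU
  obtain ⟨m, hm, hbm⟩ := hxU (hb_mem _)
  have : m = Nn + 1 := hb_inj hbm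
  subst this
  have hle : n ≤ Nn := Finset.le_sup (f := id) hns
  rw [Set.mem_Iic] at hm
  omega
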